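/- Let n be a positive integer and let ρ and σ be n×n positive definite complex matrices with trace 1. Then the set { Tr(ρ² (U*σU)⁻¹) : U an n×n unitary matrix } is exactly the closed real interval [ Σ_{i=1}^n λ↓ᵢ(ρ)²/λ↓ᵢ(σ) , Σ_{i=1}^n λ↓ᵢ(ρ)²/λ↑ᵢ(σ) ]. (This is the unitary-orbit range theorem for the maximal quantum f-divergence with the operator convex function f(x) = x², for which Ŝ_f(ρ‖σ) = Tr(σ⁻¹ρ²).) -/

import Mathlib

open Matrix
open scoped ComplexOrder

section Stmt19Aux

variable {n : ℕ}

private lemma stmt19_cancel {A B : Matrix (Fin n) (Fin n) ℂ} (h : A * B = 1) :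
    ∀ X : Matrix (Fin n) (Fin n) ℂ, A * (B * X) = X := fun X => by
  rw [← Matrix.mul_assoc, h, Matrix.one_mul]

lemma stmt19_reconstruct {A B V : Matrix (Fin n) (Fin n) ℂ}
    (hV : V ∈ Matrix.unitaryGroup (Fin n) ℂ) (h : Vᴴ * A * V = B) :
    A = V * B * Vᴴ := by
  have h1 : V * Vᴴ = 1 := by
    rw [← Matrix.star_eq_conjTranspose]; exact Matrix.mem_unitaryGroup_iff.mp hV
  rw [← h]
  calc A = (V * Vᴴ) * A * (V * Vᴴ) := by rw [h1, Matrix.one_mul, Matrix.mul_one]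
    _ = V * (Vᴴ * A * V) * Vᴴ := by noncomm_ring

lemma stmt19_inv {σ W U : Matrix (Fin n) (Fin n) ℂ} {dd : Fin n → ℝ}
    (hW : W ∈ Matrix.unitaryGroup (Fin n) ℂ) (hU : U ∈ Matrix.unitaryGroup (Fin n) ℂ)
    (hWσ : Wᴴ * σ * W = Matrix.diagonal (fun i => (dd i : ℂ)))
    (hd : ∀ j, (dd j : ℂ) ≠ 0) :
    (Uᴴ * σ * U)⁻¹ = Uᴴ * W * Matrix.diagonal (fun j => ((dd j : ℂ))⁻¹) * Wᴴ * U := by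
  have hσ := stmt19_reconstruct hW hWσ
  have hWW' : Wᴴ * W = 1 := by
    rw [← Matrix.star_eq_conjTranspose]; exact Matrix.mem_unitaryGroup_iff'.mp hW
  have hWW : W * Wᴴ = 1 := by
    rw [← Matrix.star_eq_conjTranspose]; exact Matrix.mem_unitaryGroup_iff.mp hW
  have hUU : U * Uᴴ = 1 := by
    rw [← Matrix.star_eq_conjTranspose]; exact Matrix.mem_unitaryGroup_iff.mp hU
  have hUU' : Uᴴ * U = 1 := by
    rw [← Matrix.star_eq_conjTranspose]; exact Matrix.mem_unitaryGroup_iff'.mp hU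
  apply Matrix.inv_eq_right_inv
  rw [hσ]
  have hDD : Matrix.diagonal (fun i => (dd i : ℂ)) * Matrix.diagonal (fun j => ((dd j : ℂ))⁻¹)
      = 1 := by
    rw [Matrix.diagonal_mul_diagonal]
    rw [show (fun i => (dd i : ℂ) * ((dd i : ℂ))⁻¹) = fun _ => 1 from
      funext fun i => mul_inv_cancel₀ (hd i)]
    exact Matrix.diagonal_one
  simp only [Matrix.mul_assoc, stmt19_cancel hUU, stmt19_cancel hWW', stmt19_cancel hDD,
    stmt19_cancel hWW]
  exact hUU'

lemma stmt19_trace {ρ σ V W U : Matrix (Fin n) (Fin n) ℂ} {r dd : Fin n → ℝ}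
    (hV : V ∈ Matrix.unitaryGroup (Fin n) ℂ) (hW : W ∈ Matrix.unitaryGroup (Fin n) ℂ)
    (hU : U ∈ Matrix.unitaryGroup (Fin n) ℂ)
    (hVρ : Vᴴ * ρ * V = Matrix.diagonal (fun i => (r i : ℂ)))
    (hWσ : Wᴴ * σ * W = Matrix.diagonal (fun i => (dd i : ℂ)))
    (hd : ∀ j, (dd j : ℂ) ≠ 0) :
    (ρ ^ 2 * (Uᴴ * σ * U)⁻¹).trace
      = ((∑ i, ∑ j, r i ^ 2 * (dd j)⁻¹ * Complex.normSq ((Vᴴ * Uᴴ * W) i j) : ℝ) : ℂ) := by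
  have hρ := stmt19_reconstruct hV hVρ
  have hVV' : Vᴴ * V = 1 := by
    rw [← Matrix.star_eq_conjTranspose]; exact Matrix.mem_unitaryGroup_iff'.mp hV
  have hρ2 : ρ ^ 2 = V * Matrix.diagonal (fun i => (r i : ℂ) ^ 2) * Vᴴ := by
    rw [sq, hρ]
    simp only [Matrix.mul_assoc, stmt19_cancel hVV']
    rw [← Matrix.mul_assoc (Matrix.diagonal _), Matrix.diagonal_mul_diagonal]
    congr 2
    ext i
    ring
  rw [stmt19_inv hW hU hWσ hd, hρ2]
  set Q := Vᴴ * Uᴴ * W with hQdef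
  rw [show V * Matrix.diagonal (fun i => (r i : ℂ) ^ 2) * Vᴴ *
        (Uᴴ * W * Matrix.diagonal (fun j => ((dd j : ℂ))⁻¹) * Wᴴ * U)
      = V * (Matrix.diagonal (fun i => (r i : ℂ) ^ 2) * Vᴴ *
          (Uᴴ * W * Matrix.diagonal (fun j => ((dd j : ℂ))⁻¹) * Wᴴ * U)) from by
    noncomm_ring]
  rw [Matrix.trace_mul_comm]
  rw [show Matrix.diagonal (fun i => (r i : ℂ) ^ 2) * Vᴴ *
        (Uᴴ * W * Matrix.diagonal (fun j => ((dd j : ℂ))⁻¹) * Wᴴ * U) * V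
      = Matrix.diagonal (fun i => (r i : ℂ) ^ 2) *
          (Q * (Matrix.diagonal (fun j => ((dd j : ℂ))⁻¹) * Qᴴ)) from by
    rw [hQdef]
    simp only [Matrix.conjTranspose_mul, Matrix.conjTranspose_conjTranspose]
    noncomm_ring]
  have hdiag : ∀ i, (Matrix.diagonal (fun i => (r i : ℂ) ^ 2) *
        (Q * (Matrix.diagonal (fun j => ((dd j : ℂ))⁻¹) * Qᴴ))) i i
      = ∑ j, ((r i : ℂ) ^ 2 * ((dd j : ℂ))⁻¹ * (Complex.normSq (Q i j) : ℂ)) := by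
    intro i
    rw [Matrix.diagonal_mul, Matrix.mul_apply, Finset.mul_sum]
    refine Finset.sum_congr rfl fun j _ => ?_
    rw [Matrix.diagonal_mul, Matrix.conjTranspose_apply, ← Complex.mul_conj]
    simp only [Complex.star_def]
    ring
  rw [Matrix.trace]
  push_cast
  exact Finset.sum_congr rfl fun i _ => hdiag i

lemma stmt19_rowsum {Q : Matrix (Fin n) (Fin n) ℂ} (h1 : Q * Qᴴ = 1) (i : Fin n) :
    ∑ j, Complex.normSq (Q i j) = 1 := by
  have := congrFun (congrFun h1 i) i
  simp only [Matrix.mul_apply, Matrix.conjTranspose_apply, Matrix.one_apply_eq] at this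
  have h2 : ∀ j, Q i j * star (Q i j) = (Complex.normSq (Q i j) : ℂ) := fun j =>
    Complex.mul_conj _
  rw [Finset.sum_congr rfl (fun j _ => h2 j)] at this
  exact_mod_cast this

lemma stmt19_ds {Q : Matrix (Fin n) (Fin n) ℂ} (hQ : Q ∈ Matrix.unitaryGroup (Fin n) ℂ) :
    (Matrix.of fun i j => Complex.normSq (Q i j)) ∈ doublyStochastic ℝ (Fin n) := by
  rw [mem_doublyStochastic_iff_sum]
  have h1 : Q * Qᴴ = 1 := by
    rw [← Matrix.star_eq_conjTranspose]
    exact (Matrix.mem_unitaryGroup_iff.mp hQ)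
  have h2 : Qᴴ * Qᴴᴴ = 1 := by
    simpa [← Matrix.star_eq_conjTranspose] using (Matrix.mem_unitaryGroup_iff'.mp hQ)
  refine ⟨fun i j => Complex.normSq_nonneg _, fun i => stmt19_rowsum h1 i, fun j => ?_⟩
  have := stmt19_rowsum h2 j
  simpa [Matrix.conjTranspose_apply, Complex.normSq_conj] using this

lemma stmt19_sum_swap {a b : Fin n → ℝ} {w : Equiv.Perm (Fin n) → ℝ}
    {s : Matrix (Fin n) (Fin n) ℝ} (hws : ∑ π : Equiv.Perm (Fin n), w π • π.permMatrix ℝ = s) :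
    ∑ i, ∑ j, a i * b j * s i j
      = ∑ π : Equiv.Perm (Fin n), w π * (∑ i, ∑ j, a i * b j * (π.permMatrix ℝ) i j) := by
  have hent : ∀ i j, s i j = ∑ π : Equiv.Perm (Fin n), w π * (π.permMatrix ℝ) i j := by
    intro i j
    rw [← hws]
    simp [Matrix.sum_apply]
  calc ∑ i, ∑ j, a i * b j * s i j
      = ∑ i, ∑ j, ∑ π : Equiv.Perm (Fin n), w π * (a i * b j * (π.permMatrix ℝ) i j) := by
        refine Finset.sum_congr rfl fun i _ => Finset.sum_congr rfl fun j _ => ?_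
        rw [hent i j, Finset.mul_sum]
        exact Finset.sum_congr rfl fun π _ => by ring
    _ = ∑ π : Equiv.Perm (Fin n), ∑ i, ∑ j, w π * (a i * b j * (π.permMatrix ℝ) i j) := by
        rw [show (∑ i, ∑ j, ∑ π : Equiv.Perm (Fin n), w π * (a i * b j * (π.permMatrix ℝ) i j))
            = ∑ i, ∑ π : Equiv.Perm (Fin n), ∑ j, w π * (a i * b j * (π.permMatrix ℝ) i j) from
          Finset.sum_congr rfl fun i _ => Finset.sum_comm]
        exact Finset.sum_comm
    _ = ∑ π : Equiv.Perm (Fin n), w π * (∑ i, ∑ j, a i * b j * (π.permMatrix ℝ) i j) := by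
        refine Finset.sum_congr rfl fun π _ => ?_
        simp [Finset.mul_sum]

lemma stmt19_perm_sum {a b : Fin n → ℝ} (π : Equiv.Perm (Fin n)) :
    ∑ i, ∑ j, a i * b j * (π.permMatrix ℝ) i j = ∑ i, a i * b (π i) := by
  refine Finset.sum_congr rfl fun i _ => ?_
  rw [Finset.sum_eq_single (π i)]
  · simp [Equiv.Perm.permMatrix, PEquiv.toMatrix_apply, Equiv.toPEquiv_apply]
  · intro j _ hj
    simp [Equiv.Perm.permMatrix, PEquiv.toMatrix_apply, Equiv.toPEquiv_apply, Ne.symm hj]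
  · simp

lemma stmt19_bound_upper {a b : Fin n → ℝ} (hab : Monovary a b)
    {s : Matrix (Fin n) (Fin n) ℝ} (hs : s ∈ doublyStochastic ℝ (Fin n)) :
    ∑ i, ∑ j, a i * b j * s i j ≤ ∑ i, a i * b i := by
  obtain ⟨w, hw0, hw1, hws⟩ := exists_eq_sum_perm_of_mem_doublyStochastic hs
  calc ∑ i, ∑ j, a i * b j * s i j
      = ∑ π : Equiv.Perm (Fin n), w π * (∑ i, ∑ j, a i * b j * (π.permMatrix ℝ) i j) :=
        stmt19_sum_swap hws
    _ ≤ ∑ π : Equiv.Perm (Fin n), w π * (∑ i, a i * b i) := by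
        refine Finset.sum_le_sum fun π _ => ?_
        rw [stmt19_perm_sum π]
        exact mul_le_mul_of_nonneg_left (hab.sum_mul_comp_perm_le_sum_mul) (hw0 π)
    _ = ∑ i, a i * b i := by rw [← Finset.sum_mul, hw1, one_mul]

lemma stmt19_bound_lower {a b : Fin n → ℝ} (hab : Antivary a b)
    {s : Matrix (Fin n) (Fin n) ℝ} (hs : s ∈ doublyStochastic ℝ (Fin n)) :
    ∑ i, a i * b i ≤ ∑ i, ∑ j, a i * b j * s i j := by
  obtain ⟨w, hw0, hw1, hws⟩ := exists_eq_sum_perm_of_mem_doublyStochastic hs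
  calc ∑ i, a i * b i
      = ∑ π : Equiv.Perm (Fin n), w π * (∑ i, a i * b i) := by
        rw [← Finset.sum_mul, hw1, one_mul]
    _ ≤ ∑ π : Equiv.Perm (Fin n), w π * (∑ i, ∑ j, a i * b j * (π.permMatrix ℝ) i j) := by
        refine Finset.sum_le_sum fun π _ => ?_
        rw [stmt19_perm_sum π]
        exact mul_le_mul_of_nonneg_left (hab.sum_mul_le_sum_mul_comp_perm) (hw0 π)
    _ = ∑ i, ∑ j, a i * b j * s i j := (stmt19_sum_swap hws).symm

lemma stmt19_pos {σ W : Matrix (Fin n) (Fin n) ℂ} {dd : Fin n → ℝ}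
    (hσ : σ.PosDef) (hW : W ∈ Matrix.unitaryGroup (Fin n) ℂ)
    (hWσ : Wᴴ * σ * W = Matrix.diagonal (fun i => (dd i : ℂ))) :
    ∀ i, 0 < dd i := by
  have hWW' : Wᴴ * W = 1 := by
    rw [← Matrix.star_eq_conjTranspose]; exact Matrix.mem_unitaryGroup_iff'.mp hW
  have hPD : (Matrix.diagonal (fun i => (dd i : ℂ))).PosDef := by
    rw [← hWσ]
    refine Matrix.PosDef.of_dotProduct_mulVec_pos ?_ ?_
    · exact Matrix.isHermitian_conjTranspose_mul_mul W hσ.1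
    · intro x hx
      have hWx : W *ᵥ x ≠ 0 := by
        intro h
        apply hx
        have : (Wᴴ * W) *ᵥ x = Wᴴ *ᵥ (W *ᵥ x) := by rw [Matrix.mulVec_mulVec]
        rw [hWW', Matrix.one_mulVec, h, Matrix.mulVec_zero] at this
        exact this
      simpa only [star_mulVec, dotProduct_mulVec, vecMul_vecMul] using hσ.dotProduct_mulVec_pos hWx
  intro i
  have := Matrix.posDef_diagonal_iff.mp hPD i
  exact_mod_cast this

open Polynomial in
lemma stmt19_charpoly_conj {A G : Matrix (Fin n) (Fin n) ℂ}
    (hG : G ∈ Matrix.unitaryGroup (Fin n) ℂ) :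
    (G * A * Gᴴ).charpoly = A.charpoly := by
  have hGG : G * Gᴴ = 1 := by
    rw [← Matrix.star_eq_conjTranspose]; exact Matrix.mem_unitaryGroup_iff.mp hG
  have hGG' : Gᴴ * G = 1 := by
    rw [← Matrix.star_eq_conjTranspose]; exact Matrix.mem_unitaryGroup_iff'.mp hG
  have key : charmatrix (G * A * Gᴴ)
      = (C : ℂ →+* ℂ[X]).mapMatrix G * charmatrix A * (C : ℂ →+* ℂ[X]).mapMatrix Gᴴ := by
    unfold charmatrix
    rw [Matrix.mul_sub, Matrix.sub_mul]
    congr 1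
    · simp only [RingHom.mapMatrix_apply]
      rw [← (Matrix.scalar_commute (X : ℂ[X]) (fun r' => Commute.all _ _) (G.map C)).eq,
        Matrix.mul_assoc, ← Matrix.map_mul, hGG]
      simp
    · simp only [RingHom.mapMatrix_apply]
      rw [← Matrix.map_mul, ← Matrix.map_mul]
  rw [Matrix.charpoly, Matrix.charpoly, key, Matrix.det_mul, Matrix.det_mul]
  rw [mul_comm, ← mul_assoc, ← Matrix.det_mul]
  simp only [RingHom.mapMatrix_apply]
  rw [← Matrix.map_mul, hGG']
  simp

open Polynomial in
lemma stmt19_multiset_eq {d e : Fin n → ℝ}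
    (h : (Matrix.diagonal (fun i => (d i : ℂ))).charpoly
       = (Matrix.diagonal (fun i => (e i : ℂ))).charpoly)
    (hd : Antitone d) (he : Monotone e) : ∀ i, e i = d i.rev := by
  have hchar : ∀ v : Fin n → ℝ, (Matrix.diagonal (fun i => (v i : ℂ))).charpoly
      = ((Finset.univ.val.map fun i => (v i : ℂ)).map fun a => X - C a).prod := by
    intro v
    rw [show (Matrix.diagonal (fun i => (v i : ℂ))).charpoly = ∏ i, (X - C ((v i : ℂ))) from ?_]
    · rw [Finset.prod, Multiset.map_map]
      rfl
    · rw [Matrix.charpoly]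
      have : charmatrix (Matrix.diagonal (fun i => (v i : ℂ)))
          = Matrix.diagonal (fun i => X - C ((v i : ℂ))) := by
        ext i j
        by_cases hij : i = j
        · subst hij; simp [charmatrix_apply, Matrix.diagonal_apply_eq]
        · simp [charmatrix_apply, Matrix.diagonal_apply_ne _ hij, hij]
      rw [this, Matrix.det_diagonal]
  rw [hchar, hchar] at h
  have hms : (Finset.univ.val.map fun i => (d i : ℂ)) = Finset.univ.val.map fun i => (e i : ℂ) := by
    have := congrArg Polynomial.roots h
    rwa [Polynomial.roots_multiset_prod_X_sub_C, Polynomial.roots_multiset_prod_X_sub_C] at this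
  have hms' : Finset.univ.val.map d = Finset.univ.val.map e := by
    apply Multiset.map_injective (f := (Complex.ofReal : ℝ → ℂ)) Complex.ofReal_injective
    rwa [Multiset.map_map, Multiset.map_map]
  have hrevuniv : (Finset.univ.val : Multiset (Fin n)).map Fin.rev = Finset.univ.val := by
    have h1 : Finset.univ.map (Fin.revPerm (n := n)).toEmbedding = Finset.univ :=
      Finset.map_univ_equiv _
    have h2 := congrArg Finset.val h1
    rw [Finset.map_val] at h2
    exact h2
  have hms'' : Finset.univ.val.map (fun i : Fin n => d i.rev) = Finset.univ.val.map e := by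
    rw [show (fun i : Fin n => d i.rev) = d ∘ Fin.rev from rfl, ← Multiset.map_map, hrevuniv, hms']
  have hperm : (List.ofFn (fun i : Fin n => d i.rev)).Perm (List.ofFn e) := by
    rw [← Multiset.coe_eq_coe]
    rw [← Fin.univ_val_map, ← Fin.univ_val_map]
    exact hms''
  have hsorted1 : (List.ofFn (fun i : Fin n => d i.rev)).SortedLE := by
    rw [List.sortedLE_ofFn_iff]
    intro i j hij
    exact hd (Fin.rev_le_rev.mpr hij)
  have hsorted2 : (List.ofFn e).SortedLE := by
    rw [List.sortedLE_ofFn_iff]; exact he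
  have := List.Perm.eq_of_sortedLE hsorted1 hsorted2 hperm
  have := List.ofFn_injective this
  intro i
  exact (congrFun this i).symm

noncomputable def stmt19J (n : ℕ) : Matrix (Fin n) (Fin n) ℂ :=
  Matrix.of fun i j => if j = Fin.rev i then (1 : ℂ) else 0

noncomputable def stmt19P (n : ℕ) : Matrix (Fin n) (Fin n) ℂ :=
  (2 : ℂ)⁻¹ • (1 - stmt19J n)

noncomputable def stmt19Q (n : ℕ) (t : ℝ) : Matrix (Fin n) (Fin n) ℂ :=
  1 + (Complex.exp ((t : ℂ) * Real.pi * Complex.I) - 1) • stmt19P n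

lemma stmt19J_conjTranspose : (stmt19J n)ᴴ = stmt19J n := by
  ext i j
  simp only [stmt19J, Matrix.conjTranspose_apply, Matrix.of_apply]
  by_cases h : i = Fin.rev j
  · have h2 : j = Fin.rev i := by rw [h, Fin.rev_rev]
    rw [if_pos h, if_pos h2, star_one]
  · have h2 : ¬ j = Fin.rev i := fun hh => h (by rw [hh, Fin.rev_rev])
    rw [if_neg h, if_neg h2, star_zero]

lemma stmt19J_mul_self : stmt19J n * stmt19J n = 1 := by
  ext i j
  simp only [stmt19J, Matrix.mul_apply, Matrix.of_apply, Matrix.one_apply]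
  rw [Finset.sum_eq_single (Fin.rev i)]
  · simp only [if_pos rfl, one_mul]
    by_cases h : j = Fin.rev (Fin.rev i)
    · rw [Fin.rev_rev] at h; simp [h]
    · rw [Fin.rev_rev] at h; simp [h, Ne.symm h]
  · intro k _ hk; simp [hk]
  · simp

lemma stmt19P_conjTranspose : (stmt19P n)ᴴ = stmt19P n := by
  simp [stmt19P, Matrix.conjTranspose_smul, stmt19J_conjTranspose, Matrix.conjTranspose_sub]

lemma stmt19P_sq : stmt19P n * stmt19P n = stmt19P n := by
  have hJ := stmt19J_mul_self (n := n)
  simp only [stmt19P, Matrix.smul_mul, Matrix.mul_smul, smul_smul, Matrix.sub_mul, Matrix.mul_sub,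
    Matrix.one_mul, Matrix.mul_one, hJ]
  rw [← smul_sub]
  rw [show (1 : Matrix (Fin n) (Fin n) ℂ) - stmt19J n - (stmt19J n - 1)
      = (2 : ℂ) • (1 - stmt19J n) from by rw [two_smul]; abel]
  rw [smul_smul, smul_smul]
  norm_num

lemma stmt19Q_unitary (t : ℝ) : stmt19Q n t ∈ Matrix.unitaryGroup (Fin n) ℂ := by
  rw [Matrix.mem_unitaryGroup_iff']
  set z := Complex.exp ((t : ℂ) * Real.pi * Complex.I) with hz
  have hzz : z * (starRingEnd ℂ) z = 1 := by
    rw [hz, ← Complex.exp_conj, ← Complex.exp_add]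
    rw [show (t : ℂ) * Real.pi * Complex.I + (starRingEnd ℂ) ((t : ℂ) * Real.pi * Complex.I)
        = 0 from by
      rw [_root_.map_mul, _root_.map_mul, Complex.conj_I, Complex.conj_ofReal,
        Complex.conj_ofReal]
      ring]
    exact Complex.exp_zero
  have hstar : star (stmt19Q n t) = 1 + (starRingEnd ℂ) (z - 1) • stmt19P n := by
    rw [stmt19Q, star_add, star_one, star_smul, Matrix.star_eq_conjTranspose,
      stmt19P_conjTranspose]
    rfl
  rw [hstar, stmt19Q, ← hz]
  rw [Matrix.mul_add, Matrix.add_mul, Matrix.add_mul, Matrix.one_mul, Matrix.mul_one]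
  simp only [Matrix.one_mul, Matrix.mul_smul, Matrix.smul_mul, smul_smul, stmt19P_sq]
  rw [show (1 : Matrix (Fin n) (Fin n) ℂ) + (starRingEnd ℂ) (z - 1) • stmt19P n +
        ((z - 1) • stmt19P n + ((z - 1) * (starRingEnd ℂ) (z - 1)) • stmt19P n)
      = 1 + (((z - 1) + (starRingEnd ℂ) (z - 1) + (z - 1) * (starRingEnd ℂ) (z - 1)) • stmt19P n)
      from by rw [add_smul, add_smul]; abel]
  rw [show (z - 1) + (starRingEnd ℂ) (z - 1) + (z - 1) * (starRingEnd ℂ) (z - 1) = 0 from by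
    rw [map_sub, _root_.map_one]
    linear_combination hzz]
  simp

lemma stmt19Q_zero : stmt19Q n 0 = 1 := by
  simp [stmt19Q]

lemma stmt19Q_one : stmt19Q n 1 = stmt19J n := by
  rw [stmt19Q]
  rw [show Complex.exp ((1 : ℝ) * Real.pi * Complex.I) - 1 = -2 from by
    rw [Complex.ofReal_one, one_mul]
    rw [show Complex.exp ((Real.pi : ℂ) * Complex.I) = -1 from Complex.exp_pi_mul_I]
    ring]
  rw [show (-2 : ℂ) • stmt19P n = -(1 - stmt19J n) from by
    rw [stmt19P, smul_smul]; norm_num]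
  abel

end Stmt19Aux

/-- the set of values `Tr(ρ²(U*σU)⁻¹)` over the unitary group is exactly
the closed real interval `[Σᵢ λ↓ᵢ(ρ)²/λ↓ᵢ(σ), Σᵢ λ↓ᵢ(ρ)²/λ↑ᵢ(σ)]` (embedded in `ℂ`). -/
theorem stmt19 (n : ℕ) (hn : 0 < n)
    (ρ σ : Matrix (Fin n) (Fin n) ℂ)
    (hρ : ρ.PosDef) (hσ : σ.PosDef)
    (hρtr : ρ.trace = 1) (hσtr : σ.trace = 1)
    (r d e : Fin n → ℝ) (hr : Antitone r) (hd : Antitone d) (he : Monotone e)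
    (V W₁ W₂ : Matrix (Fin n) (Fin n) ℂ)
    (hV : V ∈ Matrix.unitaryGroup (Fin n) ℂ)
    (hW₁ : W₁ ∈ Matrix.unitaryGroup (Fin n) ℂ)
    (hW₂ : W₂ ∈ Matrix.unitaryGroup (Fin n) ℂ)
    (hVρ : Vᴴ * ρ * V = Matrix.diagonal (fun i => (r i : ℂ)))
    (hW₁σ : W₁ᴴ * σ * W₁ = Matrix.diagonal (fun i => (d i : ℂ)))
    (hW₂σ : W₂ᴴ * σ * W₂ = Matrix.diagonal (fun i => (e i : ℂ))) :
    {z : ℂ | ∃ U ∈ Matrix.unitaryGroup (Fin n) ℂ, (ρ ^ 2 * (Uᴴ * σ * U)⁻¹).trace = z} =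
      Complex.ofReal '' Set.Icc (∑ i, r i ^ 2 / d i) (∑ i, r i ^ 2 / e i) := by
  have hdpos : ∀ i, 0 < d i := stmt19_pos hσ hW₁ hW₁σ
  have hepos : ∀ i, 0 < e i := stmt19_pos hσ hW₂ hW₂σ
  have hrpos : ∀ i, 0 < r i := stmt19_pos hρ hV hVρ
  have hdne : ∀ j, (d j : ℂ) ≠ 0 := fun j => by
    exact_mod_cast (hdpos j).ne'
  have hene : ∀ j, (e j : ℂ) ≠ 0 := fun j => by
    exact_mod_cast (hepos j).ne'
  -- e is the reversal of d
  have hG : W₁ᴴ * W₂ ∈ Matrix.unitaryGroup (Fin n) ℂ := by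
    rw [← Matrix.star_eq_conjTranspose]
    exact mul_mem (Unitary.star_mem hW₁) hW₂
  have hσ2 := stmt19_reconstruct hW₂ hW₂σ
  have hsim : Matrix.diagonal (fun i => (d i : ℂ))
      = (W₁ᴴ * W₂) * Matrix.diagonal (fun i => (e i : ℂ)) * (W₁ᴴ * W₂)ᴴ := by
    rw [← hW₁σ, hσ2]
    simp only [Matrix.conjTranspose_mul, Matrix.conjTranspose_conjTranspose]
    noncomm_ring
  have hcp : (Matrix.diagonal (fun i => (d i : ℂ))).charpoly
      = (Matrix.diagonal (fun i => (e i : ℂ))).charpoly := by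
    rw [hsim, stmt19_charpoly_conj hG]
  have hed : ∀ i, e i = d i.rev := stmt19_multiset_eq hcp hd he
  -- monotonicity facts
  have ha : Antitone (fun i => r i ^ 2) := fun i j hij =>
    pow_le_pow_left₀ (hrpos j).le (hr hij) 2
  have hbd : Monotone (fun j => (d j)⁻¹) := fun i j hij =>
    inv_anti₀ (hdpos j) (hd hij)
  have hbe : Antitone (fun j => (e j)⁻¹) := fun i j hij =>
    inv_anti₀ (hepos i) (he hij)
  ext z
  simp only [Set.mem_setOf_eq, Set.mem_image]
  constructor
  · rintro ⟨U, hU, rfl⟩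
    have hQ1 : Vᴴ * Uᴴ * W₁ ∈ Matrix.unitaryGroup (Fin n) ℂ := by
      rw [← Matrix.star_eq_conjTranspose, ← Matrix.star_eq_conjTranspose]
      exact mul_mem (mul_mem (Unitary.star_mem hV) (Unitary.star_mem hU)) hW₁
    have hQ2 : Vᴴ * Uᴴ * W₂ ∈ Matrix.unitaryGroup (Fin n) ℂ := by
      rw [← Matrix.star_eq_conjTranspose, ← Matrix.star_eq_conjTranspose]
      exact mul_mem (mul_mem (Unitary.star_mem hV) (Unitary.star_mem hU)) hW₂
    have htr1 := stmt19_trace hV hW₁ hU hVρ hW₁σ hdne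
    have htr2 := stmt19_trace hV hW₂ hU hVρ hW₂σ hene
    refine ⟨∑ i, ∑ j, r i ^ 2 * (d j)⁻¹ * Complex.normSq ((Vᴴ * Uᴴ * W₁) i j), ⟨?_, ?_⟩,
      htr1.symm⟩
    · -- lower bound
      have hlb := stmt19_bound_lower (ha.antivary hbd) (stmt19_ds hQ1)
      calc ∑ i, r i ^ 2 / d i = ∑ i, r i ^ 2 * (d i)⁻¹ :=
            Finset.sum_congr rfl fun i _ => div_eq_mul_inv _ _
        _ ≤ _ := hlb
    · -- upper bound, via the second representation
      have heq : (∑ i, ∑ j, r i ^ 2 * (d j)⁻¹ * Complex.normSq ((Vᴴ * Uᴴ * W₁) i j))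
          = ∑ i, ∑ j, r i ^ 2 * (e j)⁻¹ * Complex.normSq ((Vᴴ * Uᴴ * W₂) i j) := by
        have := htr1.symm.trans htr2
        exact_mod_cast this
      rw [heq]
      have hub := stmt19_bound_upper (ha.monovary hbe) (stmt19_ds hQ2)
      calc ∑ i, ∑ j, r i ^ 2 * (e j)⁻¹ * Complex.normSq ((Vᴴ * Uᴴ * W₂) i j)
          ≤ ∑ i, r i ^ 2 * (e i)⁻¹ := hub
        _ = ∑ i, r i ^ 2 / e i :=
            Finset.sum_congr rfl fun i _ => (div_eq_mul_inv _ _).symm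
  · rintro ⟨t, ⟨hlo, hhi⟩, rfl⟩
    -- the value function along the path
    set g : ℝ → ℝ := fun θ => ∑ i, ∑ j, r i ^ 2 * (d j)⁻¹ * Complex.normSq (stmt19Q n θ i j)
      with hgdef
    have hg0 : g 0 = ∑ i, r i ^ 2 / d i := by
      rw [hgdef]
      simp only [stmt19Q_zero]
      refine Finset.sum_congr rfl fun i _ => ?_
      rw [Finset.sum_eq_single i]
      · rw [Matrix.one_apply_eq]
        simp [div_eq_mul_inv]
      · intro j _ hj
        rw [Matrix.one_apply_ne (Ne.symm hj)]
        simp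
      · simp
    have hg1 : g 1 = ∑ i, r i ^ 2 / e i := by
      rw [hgdef]
      simp only [stmt19Q_one]
      refine Finset.sum_congr rfl fun i _ => ?_
      rw [Finset.sum_eq_single (Fin.rev i)]
      · rw [show stmt19J n i (Fin.rev i) = 1 from by simp [stmt19J]]
        rw [hed i, div_eq_mul_inv]
        simp
      · intro j _ hj
        rw [show stmt19J n i j = 0 from by simp [stmt19J, hj]]
        simp
      · simp
    have hgc : Continuous g := by
      rw [hgdef]
      refine continuous_finset_sum _ fun i _ => continuous_finset_sum _ fun j _ => ?_
      refine Continuous.mul continuous_const ?_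
      have hentry : (fun θ : ℝ => stmt19Q n θ i j)
          = fun θ : ℝ => (1 : Matrix (Fin n) (Fin n) ℂ) i j
              + (Complex.exp ((θ : ℂ) * Real.pi * Complex.I) - 1) * stmt19P n i j := rfl
      refine Complex.continuous_normSq.comp ?_
      rw [hentry]
      refine Continuous.add continuous_const ?_
      refine Continuous.mul (Continuous.sub ?_ continuous_const) continuous_const
      exact Complex.continuous_exp.comp
        ((Complex.continuous_ofReal.mul continuous_const).mul continuous_const)
    have hIcc : t ∈ Set.Icc (g 0) (g 1) := by
      rw [hg0, hg1]; exact ⟨hlo, hhi⟩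
    obtain ⟨θ, _, hθ⟩ := intermediate_value_Icc (by norm_num : (0:ℝ) ≤ 1)
      hgc.continuousOn hIcc
    refine ⟨W₁ * (stmt19Q n θ)ᴴ * Vᴴ, ?_, ?_⟩
    · rw [← Matrix.star_eq_conjTranspose, ← Matrix.star_eq_conjTranspose]
      exact mul_mem (mul_mem hW₁ (Unitary.star_mem (stmt19Q_unitary θ))) (Unitary.star_mem hV)
    · have hUmem : W₁ * (stmt19Q n θ)ᴴ * Vᴴ ∈ Matrix.unitaryGroup (Fin n) ℂ := by
        rw [← Matrix.star_eq_conjTranspose, ← Matrix.star_eq_conjTranspose]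
        exact mul_mem (mul_mem hW₁ (Unitary.star_mem (stmt19Q_unitary θ))) (Unitary.star_mem hV)
      have htr := stmt19_trace hV hW₁ hUmem hVρ hW₁σ hdne
      rw [htr]
      have hVV' : Vᴴ * V = 1 := by
        rw [← Matrix.star_eq_conjTranspose]; exact Matrix.mem_unitaryGroup_iff'.mp hV
      have hW₁W₁' : W₁ᴴ * W₁ = 1 := by
        rw [← Matrix.star_eq_conjTranspose]; exact Matrix.mem_unitaryGroup_iff'.mp hW₁
      have hQfix : Vᴴ * (W₁ * (stmt19Q n θ)ᴴ * Vᴴ)ᴴ * W₁ = stmt19Q n θ := by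
        simp only [Matrix.conjTranspose_mul, Matrix.conjTranspose_conjTranspose]
        simp only [Matrix.mul_assoc, stmt19_cancel hVV', stmt19_cancel hW₁W₁']
        rw [hW₁W₁', Matrix.mul_one]
      rw [hQfix]
      exact_mod_cast congrArg Complex.ofReal hθ
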